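/- Let F be an algebraically closed field, n > 1 an integer, and γ ∈ F. For x in the split octonion algebra O over F, the equation x^n = γ·1 holds if and only if one of the following holds: (i) there exists ξ₁ ∈ F with ξ₁^n = γ and x = ξ₁·1; (ii) there exist ξ₁ ≠ ξ₂ in F with ξ₁^n = ξ₂^n = γ and an F-algebra automorphism g of O with x = g(ξ₁·e₁ + ξ₂·e₂); (iii) the image of n in F is zero or γ = 0, and there exist ξ₁ ∈ F with ξ₁^n = γ and an F-algebra automorphism g of O with x = g(ξ₁·1 + u₁). -/

import Mathlib

noncomputable section

/-- The split octonion algebra over `F`, given by Zorn vector matrices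
`(x1, u; v, x2)` with `x1, x2 ∈ F` and `u, v ∈ F³`. -/
@[ext]
structure SplitOctonion (F : Type*) where
  x1 : F
  u : Fin 3 → F
  v : Fin 3 → F
  x2 : F

namespace SplitOctonion

variable {F : Type*} [Field F]

/-- Dot product on `F³`. -/
def dot (x y : Fin 3 → F) : F := x 0 * y 0 + x 1 * y 1 + x 2 * y 2

/-- Cross product on `F³`. -/
def cross (x y : Fin 3 → F) : Fin 3 → F :=
  ![x 1 * y 2 - x 2 * y 1, x 2 * y 0 - x 0 * y 2, x 0 * y 1 - x 1 * y 0]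

instance : Zero (SplitOctonion F) := ⟨⟨0, 0, 0, 0⟩⟩
instance : One (SplitOctonion F) := ⟨⟨1, 0, 0, 1⟩⟩
instance : Add (SplitOctonion F) :=
  ⟨fun x y => ⟨x.x1 + y.x1, x.u + y.u, x.v + y.v, x.x2 + y.x2⟩⟩
instance : Neg (SplitOctonion F) := ⟨fun x => ⟨-x.x1, -x.u, -x.v, -x.x2⟩⟩
instance : SMul F (SplitOctonion F) :=
  ⟨fun c x => ⟨c * x.x1, c • x.u, c • x.v, c * x.x2⟩⟩

/-- Zorn vector matrix multiplication. -/
instance : Mul (SplitOctonion F) :=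
  ⟨fun x y => ⟨x.x1 * y.x1 + dot x.u y.v,
    x.x1 • y.u + y.x2 • x.u - cross x.v y.v,
    y.x1 • x.v + x.x2 • y.v + cross x.u y.u,
    x.x2 * y.x2 + dot x.v y.u⟩⟩

@[simp] lemma zero_x1 : (0 : SplitOctonion F).x1 = 0 := rfl
@[simp] lemma zero_u : (0 : SplitOctonion F).u = 0 := rfl
@[simp] lemma zero_v : (0 : SplitOctonion F).v = 0 := rfl
@[simp] lemma zero_x2 : (0 : SplitOctonion F).x2 = 0 := rfl
@[simp] lemma add_x1 (x y : SplitOctonion F) : (x + y).x1 = x.x1 + y.x1 := rfl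
@[simp] lemma add_u (x y : SplitOctonion F) : (x + y).u = x.u + y.u := rfl
@[simp] lemma add_v (x y : SplitOctonion F) : (x + y).v = x.v + y.v := rfl
@[simp] lemma add_x2 (x y : SplitOctonion F) : (x + y).x2 = x.x2 + y.x2 := rfl
@[simp] lemma neg_x1 (x : SplitOctonion F) : (-x).x1 = -x.x1 := rfl
@[simp] lemma neg_u (x : SplitOctonion F) : (-x).u = -x.u := rfl
@[simp] lemma neg_v (x : SplitOctonion F) : (-x).v = -x.v := rfl
@[simp] lemma neg_x2 (x : SplitOctonion F) : (-x).x2 = -x.x2 := rfl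
@[simp] lemma smul_x1 (c : F) (x : SplitOctonion F) : (c • x).x1 = c * x.x1 := rfl
@[simp] lemma smul_u (c : F) (x : SplitOctonion F) : (c • x).u = c • x.u := rfl
@[simp] lemma smul_v (c : F) (x : SplitOctonion F) : (c • x).v = c • x.v := rfl
@[simp] lemma smul_x2 (c : F) (x : SplitOctonion F) : (c • x).x2 = c * x.x2 := rfl

instance : AddCommGroup (SplitOctonion F) where
  add_assoc x y z := by ext <;> simp [add_assoc]
  zero_add x := by ext <;> simp
  add_zero x := by ext <;> simp
  add_comm x y := by ext <;> simp [add_comm]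
  neg_add_cancel x := by ext <;> simp
  nsmul := nsmulRec
  zsmul := zsmulRec

instance : Module F (SplitOctonion F) where
  one_smul x := by ext <;> simp
  mul_smul c d x := by ext <;> simp [mul_assoc, mul_smul]
  smul_zero c := by ext <;> simp
  smul_add c x y := by ext <;> simp [mul_add, smul_add]
  add_smul c d x := by ext <;> simp [add_mul, add_smul]
  zero_smul x := by ext <;> simp

/-- Powers of a single octonion (well defined by power-associativity). -/
def npow (x : SplitOctonion F) : ℕ → SplitOctonion F
  | 0 => 1
  | n + 1 => npow x n * x

instance : Pow (SplitOctonion F) ℕ := ⟨npow⟩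

/-- Substitution of an octonion into a polynomial over `F`:
`f(x) = αₙ xⁿ + ⋯ + α₁ x + α₀ • 1`. -/
def peval (f : Polynomial F) (x : SplitOctonion F) : SplitOctonion F :=
  f.sum fun i c => c • x ^ i

/-- The octonion `e₁`. -/
def e1 : SplitOctonion F := ⟨1, 0, 0, 0⟩
/-- The octonion `e₂`. -/
def e2 : SplitOctonion F := ⟨0, 0, 0, 1⟩
/-- The octonion `u₁`. -/
def u1 : SplitOctonion F := ⟨0, ![1, 0, 0], 0, 0⟩

/-- Conjugation on `O`. -/
def conj (x : SplitOctonion F) : SplitOctonion F := ⟨x.x2, -x.u, -x.v, x.x1⟩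

/-- The norm of an octonion. -/
def normO (x : SplitOctonion F) : F := x.x1 * x.x2 - dot x.u x.v

/-- The trace of an octonion. -/
def trO (x : SplitOctonion F) : F := x.x1 + x.x2

/-- `g` is an `F`-algebra automorphism of `O`: a linear bijection preserving
multiplication (and the unit). -/
def IsAlgAut (g : SplitOctonion F ≃ₗ[F] SplitOctonion F) : Prop :=
  g 1 = 1 ∧ ∀ x y, g (x * y) = g x * g y

end SplitOctonion

set_option linter.unusedSectionVars false
set_option linter.dupNamespace false
set_option maxHeartbeats 1600000

namespace SplitOctonion
variable {F : Type*} [Field F]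

@[simp] lemma mul_x1 (x y : SplitOctonion F) :
    (x * y).x1 = x.x1 * y.x1 + (x.u 0 * y.v 0 + x.u 1 * y.v 1 + x.u 2 * y.v 2) := rfl
@[simp] lemma mul_x2 (x y : SplitOctonion F) :
    (x * y).x2 = x.x2 * y.x2 + (x.v 0 * y.u 0 + x.v 1 * y.u 1 + x.v 2 * y.u 2) := rfl
@[simp] lemma mul_u0 (x y : SplitOctonion F) :
    (x * y).u 0 = x.x1 * y.u 0 + y.x2 * x.u 0 - (x.v 1 * y.v 2 - x.v 2 * y.v 1) := rfl
@[simp] lemma mul_u1 (x y : SplitOctonion F) :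
    (x * y).u 1 = x.x1 * y.u 1 + y.x2 * x.u 1 - (x.v 2 * y.v 0 - x.v 0 * y.v 2) := rfl
@[simp] lemma mul_u2 (x y : SplitOctonion F) :
    (x * y).u 2 = x.x1 * y.u 2 + y.x2 * x.u 2 - (x.v 0 * y.v 1 - x.v 1 * y.v 0) := rfl
@[simp] lemma mul_v0 (x y : SplitOctonion F) :
    (x * y).v 0 = y.x1 * x.v 0 + x.x2 * y.v 0 + (x.u 1 * y.u 2 - x.u 2 * y.u 1) := rfl
@[simp] lemma mul_v1 (x y : SplitOctonion F) :
    (x * y).v 1 = y.x1 * x.v 1 + x.x2 * y.v 1 + (x.u 2 * y.u 0 - x.u 0 * y.u 2) := rfl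
@[simp] lemma mul_v2 (x y : SplitOctonion F) :
    (x * y).v 2 = y.x1 * x.v 2 + x.x2 * y.v 2 + (x.u 0 * y.u 1 - x.u 1 * y.u 0) := rfl

@[simp] lemma one_x1 : (1 : SplitOctonion F).x1 = 1 := rfl
@[simp] lemma one_x2 : (1 : SplitOctonion F).x2 = 1 := rfl
@[simp] lemma one_u (i : Fin 3) : (1 : SplitOctonion F).u i = 0 := rfl
@[simp] lemma one_v (i : Fin 3) : (1 : SplitOctonion F).v i = 0 := rfl
@[simp] lemma smul_u' (c : F) (x : SplitOctonion F) (i : Fin 3) : (c • x).u i = c * x.u i := rfl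
@[simp] lemma smul_v' (c : F) (x : SplitOctonion F) (i : Fin 3) : (c • x).v i = c * x.v i := rfl
@[simp] lemma add_u' (x y : SplitOctonion F) (i : Fin 3) : (x + y).u i = x.u i + y.u i := rfl
@[simp] lemma add_v' (x y : SplitOctonion F) (i : Fin 3) : (x + y).v i = x.v i + y.v i := rfl
@[simp] lemma neg_u' (x : SplitOctonion F) (i : Fin 3) : (-x).u i = -(x.u i) := rfl
@[simp] lemma neg_v' (x : SplitOctonion F) (i : Fin 3) : (-x).v i = -(x.v i) := rfl
@[simp] lemma zero_u' (i : Fin 3) : (0 : SplitOctonion F).u i = 0 := rfl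
@[simp] lemma zero_v' (i : Fin 3) : (0 : SplitOctonion F).v i = 0 := rfl
@[simp] lemma sub_x1 (x y : SplitOctonion F) : (x - y).x1 = x.x1 - y.x1 := by
  rw [sub_eq_add_neg, add_x1, neg_x1]; ring
@[simp] lemma sub_x2 (x y : SplitOctonion F) : (x - y).x2 = x.x2 - y.x2 := by
  rw [sub_eq_add_neg, add_x2, neg_x2]; ring
@[simp] lemma sub_u' (x y : SplitOctonion F) (i : Fin 3) : (x - y).u i = x.u i - y.u i := by
  rw [sub_eq_add_neg, add_u', neg_u']; ring
@[simp] lemma sub_v' (x y : SplitOctonion F) (i : Fin 3) : (x - y).v i = x.v i - y.v i := by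
  rw [sub_eq_add_neg, add_v', neg_v']; ring

@[simp] lemma e1_x1 : (e1 : SplitOctonion F).x1 = 1 := rfl
@[simp] lemma e1_x2 : (e1 : SplitOctonion F).x2 = 0 := rfl
@[simp] lemma e1_u (i : Fin 3) : (e1 : SplitOctonion F).u i = 0 := rfl
@[simp] lemma e1_v (i : Fin 3) : (e1 : SplitOctonion F).v i = 0 := rfl
@[simp] lemma e2_x1 : (e2 : SplitOctonion F).x1 = 0 := rfl
@[simp] lemma e2_x2 : (e2 : SplitOctonion F).x2 = 1 := rfl
@[simp] lemma e2_u (i : Fin 3) : (e2 : SplitOctonion F).u i = 0 := rfl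
@[simp] lemma e2_v (i : Fin 3) : (e2 : SplitOctonion F).v i = 0 := rfl
@[simp] lemma u1_x1 : (u1 : SplitOctonion F).x1 = 0 := rfl
@[simp] lemma u1_x2 : (u1 : SplitOctonion F).x2 = 0 := rfl
@[simp] lemma u1_u0 : (u1 : SplitOctonion F).u 0 = 1 := rfl
@[simp] lemma u1_u1 : (u1 : SplitOctonion F).u 1 = 0 := rfl
@[simp] lemma u1_u2 : (u1 : SplitOctonion F).u 2 = 0 := rfl
@[simp] lemma u1_v (i : Fin 3) : (u1 : SplitOctonion F).v i = 0 := rfl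

@[simp] lemma mk_x1 (a : F) (u v : Fin 3 → F) (b : F) : (mk a u v b).x1 = a := rfl
@[simp] lemma mk_x2 (a : F) (u v : Fin 3 → F) (b : F) : (mk a u v b).x2 = b := rfl
@[simp] lemma mk_u (a : F) (u v : Fin 3 → F) (b : F) : (mk a u v b).u = u := rfl
@[simp] lemma mk_v (a : F) (u v : Fin 3 → F) (b : F) : (mk a u v b).v = v := rfl

lemma ext8 (x y : SplitOctonion F) (h1 : x.x1 = y.x1) (hu0 : x.u 0 = y.u 0)
    (hu1 : x.u 1 = y.u 1) (hu2 : x.u 2 = y.u 2) (hv0 : x.v 0 = y.v 0)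
    (hv1 : x.v 1 = y.v 1) (hv2 : x.v 2 = y.v 2) (h2 : x.x2 = y.x2) : x = y := by
  cases x; cases y
  simp only [SplitOctonion.ext_iff]
  refine ⟨h1, funext fun i => ?_, funext fun i => ?_, h2⟩ <;> fin_cases i <;> assumption

lemma vec_eq_iff (u : Fin 3 → F) (w : Fin 3 → F) :
    u = w ↔ (u 0 = w 0 ∧ u 1 = w 1 ∧ u 2 = w 2) := by
  constructor
  · rintro rfl; exact ⟨rfl, rfl, rfl⟩
  · rintro ⟨h0, h1, h2⟩; funext i; fin_cases i <;> assumption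

lemma vec_ne_zero_iff (u : Fin 3 → F) : u ≠ 0 ↔ (u 0 ≠ 0 ∨ u 1 ≠ 0 ∨ u 2 ≠ 0) := by
  rw [← not_and_or, ← not_and_or]; apply not_congr
  rw [show (0 : Fin 3 → F) = fun _ => 0 from rfl, vec_eq_iff]

-- powers
lemma pow_zero' (x : SplitOctonion F) : x ^ (0 : ℕ) = 1 := rfl
lemma pow_succ' (x : SplitOctonion F) (k : ℕ) : x ^ (k + 1) = x ^ k * x := rfl

lemma one_mul' (x : SplitOctonion F) : 1 * x = x := by
  refine ext8 _ _ ?_ ?_ ?_ ?_ ?_ ?_ ?_ ?_ <;> simp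
lemma mul_one' (x : SplitOctonion F) : x * 1 = x := by
  refine ext8 _ _ ?_ ?_ ?_ ?_ ?_ ?_ ?_ ?_ <;> simp
lemma smul_one_mul (c : F) (x : SplitOctonion F) : (c • (1 : SplitOctonion F)) * x = c • x := by
  refine ext8 _ _ ?_ ?_ ?_ ?_ ?_ ?_ ?_ ?_ <;> simp <;> ring
lemma mul_smul_one (c : F) (x : SplitOctonion F) : x * (c • (1 : SplitOctonion F)) = c • x := by
  refine ext8 _ _ ?_ ?_ ?_ ?_ ?_ ?_ ?_ ?_ <;> simp <;> ring

lemma sq_eq (x : SplitOctonion F) : x * x = trO x • x - normO x • (1 : SplitOctonion F) := by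
  refine ext8 _ _ ?_ ?_ ?_ ?_ ?_ ?_ ?_ ?_ <;> simp [trO, normO, dot] <;> ring

/-- coefficients of x^k = a_k • x + b_k • 1 -/
def co (t q : F) : ℕ → F × F
  | 0 => (0, 1)
  | k + 1 => ((co t q k).1 * t + (co t q k).2, -((co t q k).1) * q)

lemma pow_co (x : SplitOctonion F) (k : ℕ) :
    x ^ k = (co (trO x) (normO x) k).1 • x + (co (trO x) (normO x) k).2 • (1 : SplitOctonion F) := by
  induction k with
  | zero =>
    refine ext8 _ _ ?_ ?_ ?_ ?_ ?_ ?_ ?_ ?_ <;> simp [co, pow_zero']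
  | succ k ih =>
    rw [pow_succ', ih]
    have hsq := sq_eq x
    refine ext8 _ _ ?_ ?_ ?_ ?_ ?_ ?_ ?_ ?_ <;>
      simp [co, trO, normO, dot] <;> ring

lemma xi_pow (t q ξ : F) (hξ : ξ * ξ = t * ξ - q) (k : ℕ) :
    ξ ^ k = (co t q k).1 * ξ + (co t q k).2 := by
  induction k with
  | zero => simp [co]
  | succ k ih =>
    rw [pow_succ, ih]
    simp only [co]
    linear_combination (co t q k).1 * hξ

lemma co_repeated (ξ : F) (k : ℕ) :
    (co (2 * ξ) (ξ * ξ) (k + 1)).1 = (k + 1 : ℕ) * ξ ^ k ∧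
    (co (2 * ξ) (ξ * ξ) (k + 1)).2 = -(k : ℕ) * ξ ^ (k + 1) := by
  induction k with
  | zero => simp [co]
  | succ k ih =>
    obtain ⟨h1, h2⟩ := ih
    constructor
    · show (co (2*ξ) (ξ*ξ) (k+1)).1 * (2*ξ) + (co (2*ξ) (ξ*ξ) (k+1)).2 = _
      rw [h1, h2]
      push_cast
      ring
    · show -((co (2*ξ) (ξ*ξ) (k+1)).1) * (ξ*ξ) = _
      rw [h1]
      push_cast
      ring

lemma smul_one_pow (c : F) (k : ℕ) : (c • (1 : SplitOctonion F)) ^ k = (c ^ k) • 1 := by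
  induction k with
  | zero => simp [pow_zero']
  | succ k ih =>
    rw [pow_succ', ih, smul_one_mul, smul_smul, pow_succ]

lemma coeff_eq (x : SplitOctonion F) (hns : ¬ ∃ c : F, x = c • (1 : SplitOctonion F))
    (a b γ : F) (h : a • x + b • (1 : SplitOctonion F) = γ • (1 : SplitOctonion F)) :
    a = 0 ∧ b = γ := by
  have ha : a = 0 := by
    by_contra ha
    apply hns
    refine ⟨a⁻¹ * (γ - b), ext8 _ _ ?_ ?_ ?_ ?_ ?_ ?_ ?_ ?_⟩
    · have := congrArg SplitOctonion.x1 h; simp at this; rw [smul_x1, one_x1, mul_one]; field_simp; linear_combination this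
    · have := congrArg (fun z => SplitOctonion.u z 0) h; simp at this
      rcases this with h'|h'
      · exact absurd h' ha
      · simp [h']
    · have := congrArg (fun z => SplitOctonion.u z 1) h; simp at this
      rcases this with h'|h' ;· exact absurd h' ha
      simp [h']
    · have := congrArg (fun z => SplitOctonion.u z 2) h; simp at this
      rcases this with h'|h' ;· exact absurd h' ha
      simp [h']
    · have := congrArg (fun z => SplitOctonion.v z 0) h; simp at this
      rcases this with h'|h' ;· exact absurd h' ha
      simp [h']
    · have := congrArg (fun z => SplitOctonion.v z 1) h; simp at this
      rcases this with h'|h' ;· exact absurd h' ha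
      simp [h']
    · have := congrArg (fun z => SplitOctonion.v z 2) h; simp at this
      rcases this with h'|h' ;· exact absurd h' ha
      simp [h']
    · have := congrArg SplitOctonion.x2 h; simp at this; rw [smul_x2, one_x2, mul_one]; field_simp; linear_combination this
  subst ha
  have := congrArg SplitOctonion.x1 h; simp at this
  exact ⟨rfl, this⟩

end SplitOctonion
namespace SplitOctonion
variable {F : Type*} [Field F]

def Rel (x y : SplitOctonion F) : Prop :=
  ∃ g : SplitOctonion F ≃ₗ[F] SplitOctonion F, IsAlgAut g ∧ g x = y

lemma Rel.refl (x : SplitOctonion F) : Rel x x :=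
  ⟨LinearEquiv.refl F _, ⟨rfl, fun _ _ => rfl⟩, rfl⟩

lemma Rel.symm {x y : SplitOctonion F} (h : Rel x y) : Rel y x := by
  obtain ⟨g, ⟨h1, hm⟩, hx⟩ := h
  refine ⟨g.symm, ⟨?_, ?_⟩, by rw [← hx, g.symm_apply_apply]⟩
  · have := g.symm_apply_apply (1 : SplitOctonion F); rw [h1] at this; exact this
  · intro a b
    apply g.injective
    rw [g.apply_symm_apply, hm, g.apply_symm_apply, g.apply_symm_apply]

lemma Rel.trans {x y z : SplitOctonion F} (h : Rel x y) (h' : Rel y z) : Rel x z := by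
  obtain ⟨g, ⟨h1, hm⟩, hx⟩ := h
  obtain ⟨g', ⟨h1', hm'⟩, hx'⟩ := h'
  refine ⟨g.trans g', ⟨?_, ?_⟩, ?_⟩
  · show g' (g 1) = 1; rw [h1, h1']
  · intro a b; show g' (g (a*b)) = g' (g a) * g' (g b); rw [hm, hm']
  · show g' (g x) = z; rw [hx, hx']

/-! ### the automorphism τ -/

def tauFun (x : SplitOctonion F) : SplitOctonion F := ⟨x.x2, -x.v, -x.u, x.x1⟩

@[simp] lemma tauFun_x1 (x : SplitOctonion F) : (tauFun x).x1 = x.x2 := rfl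
@[simp] lemma tauFun_x2 (x : SplitOctonion F) : (tauFun x).x2 = x.x1 := rfl
@[simp] lemma tauFun_u (x : SplitOctonion F) (i : Fin 3) : (tauFun x).u i = -(x.v i) := rfl
@[simp] lemma tauFun_v (x : SplitOctonion F) (i : Fin 3) : (tauFun x).v i = -(x.u i) := rfl

def tauEquiv : SplitOctonion F ≃ₗ[F] SplitOctonion F where
  toFun := tauFun
  invFun := tauFun
  map_add' x y := by refine ext8 _ _ ?_ ?_ ?_ ?_ ?_ ?_ ?_ ?_ <;> simp <;> ring
  map_smul' c x := by refine ext8 _ _ ?_ ?_ ?_ ?_ ?_ ?_ ?_ ?_ <;> simp <;> ring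
  left_inv x := by refine ext8 _ _ ?_ ?_ ?_ ?_ ?_ ?_ ?_ ?_ <;> simp
  right_inv x := by refine ext8 _ _ ?_ ?_ ?_ ?_ ?_ ?_ ?_ ?_ <;> simp

@[simp] lemma tauEquiv_apply (x : SplitOctonion F) : (tauEquiv : _ ≃ₗ[F] _) x = tauFun x := rfl

lemma tau_isAut : IsAlgAut (tauEquiv : SplitOctonion F ≃ₗ[F] SplitOctonion F) := by
  constructor
  · refine ext8 _ _ ?_ ?_ ?_ ?_ ?_ ?_ ?_ ?_ <;> simp
  · intro x y
    refine ext8 _ _ ?_ ?_ ?_ ?_ ?_ ?_ ?_ ?_ <;> simp <;> ring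

lemma rel_tau (x : SplitOctonion F) : Rel x (tauFun x) := ⟨tauEquiv, tau_isAut, rfl⟩

/-! ### SL₃ automorphisms -/

/-- action of a 3×3 matrix (given by nine entries, row-major) on `u`,
and of its cofactor matrix on `v`. -/
def mv3 (a b c d e f g h i : F) (x : SplitOctonion F) : SplitOctonion F :=
  ⟨x.x1,
   ![a * x.u 0 + b * x.u 1 + c * x.u 2,
     d * x.u 0 + e * x.u 1 + f * x.u 2,
     g * x.u 0 + h * x.u 1 + i * x.u 2],
   ![(e*i - f*h) * x.v 0 + (f*g - d*i) * x.v 1 + (d*h - e*g) * x.v 2,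
     (c*h - b*i) * x.v 0 + (a*i - c*g) * x.v 1 + (b*g - a*h) * x.v 2,
     (b*f - c*e) * x.v 0 + (c*d - a*f) * x.v 1 + (a*e - b*d) * x.v 2],
   x.x2⟩

variable (a b c d e f g h i : F)

@[simp] lemma mv3_x1 (x : SplitOctonion F) : (mv3 a b c d e f g h i x).x1 = x.x1 := rfl
@[simp] lemma mv3_x2 (x : SplitOctonion F) : (mv3 a b c d e f g h i x).x2 = x.x2 := rfl
@[simp] lemma mv3_u0 (x : SplitOctonion F) :
    (mv3 a b c d e f g h i x).u 0 = a * x.u 0 + b * x.u 1 + c * x.u 2 := rfl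
@[simp] lemma mv3_u1 (x : SplitOctonion F) :
    (mv3 a b c d e f g h i x).u 1 = d * x.u 0 + e * x.u 1 + f * x.u 2 := rfl
@[simp] lemma mv3_u2 (x : SplitOctonion F) :
    (mv3 a b c d e f g h i x).u 2 = g * x.u 0 + h * x.u 1 + i * x.u 2 := rfl
@[simp] lemma mv3_v0 (x : SplitOctonion F) :
    (mv3 a b c d e f g h i x).v 0 =
      (e*i - f*h) * x.v 0 + (f*g - d*i) * x.v 1 + (d*h - e*g) * x.v 2 := rfl
@[simp] lemma mv3_v1 (x : SplitOctonion F) :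
    (mv3 a b c d e f g h i x).v 1 =
      (c*h - b*i) * x.v 0 + (a*i - c*g) * x.v 1 + (b*g - a*h) * x.v 2 := rfl
@[simp] lemma mv3_v2 (x : SplitOctonion F) :
    (mv3 a b c d e f g h i x).v 2 =
      (b*f - c*e) * x.v 0 + (c*d - a*f) * x.v 1 + (a*e - b*d) * x.v 2 := rfl

def sl3Equiv (hdet : a*(e*i - f*h) - b*(d*i - f*g) + c*(d*h - e*g) = 1) :
    SplitOctonion F ≃ₗ[F] SplitOctonion F where
  toFun := mv3 a b c d e f g h i
  invFun := mv3 (e*i - f*h) (c*h - b*i) (b*f - c*e) (f*g - d*i) (a*i - c*g) (c*d - a*f)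
      (d*h - e*g) (b*g - a*h) (a*e - b*d)
  map_add' x y := by refine ext8 _ _ ?_ ?_ ?_ ?_ ?_ ?_ ?_ ?_ <;> simp <;> ring
  map_smul' t x := by refine ext8 _ _ ?_ ?_ ?_ ?_ ?_ ?_ ?_ ?_ <;> simp <;> ring
  left_inv x := by
    refine ext8 _ _ ?_ ?_ ?_ ?_ ?_ ?_ ?_ ?_ <;> simp
    · linear_combination (x.u 0) * hdet
    · linear_combination (x.u 1) * hdet
    · linear_combination (x.u 2) * hdet
    · linear_combination ((a*(e*i - f*h) - b*(d*i - f*g) + c*(d*h - e*g) + 1) * x.v 0) * hdet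
    · linear_combination ((a*(e*i - f*h) - b*(d*i - f*g) + c*(d*h - e*g) + 1) * x.v 1) * hdet
    · linear_combination ((a*(e*i - f*h) - b*(d*i - f*g) + c*(d*h - e*g) + 1) * x.v 2) * hdet
  right_inv x := by
    refine ext8 _ _ ?_ ?_ ?_ ?_ ?_ ?_ ?_ ?_ <;> simp
    · linear_combination (x.u 0) * hdet
    · linear_combination (x.u 1) * hdet
    · linear_combination (x.u 2) * hdet
    · linear_combination ((a*(e*i - f*h) - b*(d*i - f*g) + c*(d*h - e*g) + 1) * x.v 0) * hdet
    · linear_combination ((a*(e*i - f*h) - b*(d*i - f*g) + c*(d*h - e*g) + 1) * x.v 1) * hdet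
    · linear_combination ((a*(e*i - f*h) - b*(d*i - f*g) + c*(d*h - e*g) + 1) * x.v 2) * hdet

@[simp] lemma sl3Equiv_apply (hdet : a*(e*i - f*h) - b*(d*i - f*g) + c*(d*h - e*g) = 1)
    (x : SplitOctonion F) : sl3Equiv a b c d e f g h i hdet x = mv3 a b c d e f g h i x := rfl

lemma sl3_isAut (hdet : a*(e*i - f*h) - b*(d*i - f*g) + c*(d*h - e*g) = 1) :
    IsAlgAut (sl3Equiv a b c d e f g h i hdet) := by
  constructor
  · refine ext8 _ _ ?_ ?_ ?_ ?_ ?_ ?_ ?_ ?_ <;> simp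
  · intro x y
    refine ext8 _ _ ?_ ?_ ?_ ?_ ?_ ?_ ?_ ?_ <;> simp
    · linear_combination (-(x.u 0 * y.v 0 + x.u 1 * y.v 1 + x.u 2 * y.v 2)) * hdet
    · linear_combination (a*(x.v 1 * y.v 2 - x.v 2 * y.v 1) + b*(x.v 2 * y.v 0 - x.v 0 * y.v 2)
        + c*(x.v 0 * y.v 1 - x.v 1 * y.v 0)) * hdet
    · linear_combination (d*(x.v 1 * y.v 2 - x.v 2 * y.v 1) + e*(x.v 2 * y.v 0 - x.v 0 * y.v 2)
        + f*(x.v 0 * y.v 1 - x.v 1 * y.v 0)) * hdet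
    · linear_combination (g*(x.v 1 * y.v 2 - x.v 2 * y.v 1) + h*(x.v 2 * y.v 0 - x.v 0 * y.v 2)
        + i*(x.v 0 * y.v 1 - x.v 1 * y.v 0)) * hdet
    · ring
    · ring
    · ring
    · linear_combination (-(x.v 0 * y.u 0 + x.v 1 * y.u 1 + x.v 2 * y.u 2)) * hdet

lemma rel_sl3 (hdet : a*(e*i - f*h) - b*(d*i - f*g) + c*(d*h - e*g) = 1)
    (x : SplitOctonion F) : Rel x (mv3 a b c d e f g h i x) :=
  ⟨sl3Equiv a b c d e f g h i hdet, sl3_isAut a b c d e f g h i hdet, rfl⟩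

end SplitOctonion
namespace SplitOctonion
variable {F : Type*} [Field F]

/-- quaternion-conjugation automorphisms -/
def rhoFun (p q r s n : F) (x : SplitOctonion F) : SplitOctonion F :=
  ⟨-n*p*r*(x.u 0) + n*p*s*x.x1 - n*q*r*x.x2 + n*q*s*(x.v 0),
   ![-n*p*q*x.x1 + n*p*q*x.x2 + n*p*p*(x.u 0) - n*q*q*(x.v 0),
     -n*p*r*(x.v 2) + n*p*s*(x.u 1) + n*q*r*(x.v 1) + n*q*s*(x.u 2),
     n*r*s*(x.u 1) + n*r*s*(x.v 1) - n*r*r*(x.v 2) + n*s*s*(x.u 2)],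
   ![n*r*s*x.x1 - n*r*s*x.x2 - n*r*r*(x.u 0) + n*s*s*(x.v 0),
     -n*p*r*(x.v 2) + n*p*s*(x.v 1) + n*q*r*(x.u 1) + n*q*s*(x.u 2),
     -n*p*q*(x.u 1) - n*p*q*(x.v 1) + n*p*p*(x.v 2) - n*q*q*(x.u 2)],
   n*p*r*(x.u 0) + n*p*s*x.x2 - n*q*r*x.x1 - n*q*s*(x.v 0)⟩

variable (p q r s n : F)

@[simp] lemma rhoFun_x1 (x : SplitOctonion F) :
    (rhoFun p q r s n x).x1 = -n*p*r*(x.u 0) + n*p*s*x.x1 - n*q*r*x.x2 + n*q*s*(x.v 0) := rfl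
@[simp] lemma rhoFun_u0 (x : SplitOctonion F) :
    (rhoFun p q r s n x).u 0 = -n*p*q*x.x1 + n*p*q*x.x2 + n*p*p*(x.u 0) - n*q*q*(x.v 0) := rfl
@[simp] lemma rhoFun_u1 (x : SplitOctonion F) :
    (rhoFun p q r s n x).u 1 = -n*p*r*(x.v 2) + n*p*s*(x.u 1) + n*q*r*(x.v 1) + n*q*s*(x.u 2) := rfl
@[simp] lemma rhoFun_u2 (x : SplitOctonion F) :
    (rhoFun p q r s n x).u 2 = n*r*s*(x.u 1) + n*r*s*(x.v 1) - n*r*r*(x.v 2) + n*s*s*(x.u 2) := rfl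
@[simp] lemma rhoFun_v0 (x : SplitOctonion F) :
    (rhoFun p q r s n x).v 0 = n*r*s*x.x1 - n*r*s*x.x2 - n*r*r*(x.u 0) + n*s*s*(x.v 0) := rfl
@[simp] lemma rhoFun_v1 (x : SplitOctonion F) :
    (rhoFun p q r s n x).v 1 = -n*p*r*(x.v 2) + n*p*s*(x.v 1) + n*q*r*(x.u 1) + n*q*s*(x.u 2) := rfl
@[simp] lemma rhoFun_v2 (x : SplitOctonion F) :
    (rhoFun p q r s n x).v 2 = -n*p*q*(x.u 1) - n*p*q*(x.v 1) + n*p*p*(x.v 2) - n*q*q*(x.u 2) := rfl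
@[simp] lemma rhoFun_x2 (x : SplitOctonion F) :
    (rhoFun p q r s n x).x2 = n*p*r*(x.u 0) + n*p*s*x.x2 - n*q*r*x.x1 - n*q*s*(x.v 0) := rfl

def rhoEquiv (h : n * (p*s - q*r) = 1) : SplitOctonion F ≃ₗ[F] SplitOctonion F where
  toFun := rhoFun p q r s n
  invFun := rhoFun (s*n) (-(q*n)) (-(r*n)) (p*n) (p*s - q*r)
  map_add' x y := by refine ext8 _ _ ?_ ?_ ?_ ?_ ?_ ?_ ?_ ?_ <;> simp <;> ring
  map_smul' t x := by refine ext8 _ _ ?_ ?_ ?_ ?_ ?_ ?_ ?_ ?_ <;> simp <;> ring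
  left_inv x := by
    refine ext8 _ _ ?_ ?_ ?_ ?_ ?_ ?_ ?_ ?_ <;> simp
    · linear_combination (n*p*s*x.x1 - n*q*r*x.x1 - 2*n*n*p*q*r*s*x.x1 + n*n*p*p*s*s*x.x1 + n*n*q*q*r*r*x.x1 + x.x1) * h
    · linear_combination (n*p*s*(x.u 0) - n*q*r*(x.u 0) - 2*n*n*p*q*r*s*(x.u 0) + n*n*p*p*s*s*(x.u 0) + n*n*q*q*r*r*(x.u 0) + (x.u 0)) * h
    · linear_combination (n*p*s*(x.u 1) - n*q*r*(x.u 1) - 2*n*n*p*q*r*s*(x.u 1) + n*n*p*p*s*s*(x.u 1) + n*n*q*q*r*r*(x.u 1) + (x.u 1)) * h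
    · linear_combination (n*p*s*(x.u 2) - n*q*r*(x.u 2) - 2*n*n*p*q*r*s*(x.u 2) + n*n*p*p*s*s*(x.u 2) + n*n*q*q*r*r*(x.u 2) + (x.u 2)) * h
    · linear_combination (n*p*s*(x.v 0) - n*q*r*(x.v 0) - 2*n*n*p*q*r*s*(x.v 0) + n*n*p*p*s*s*(x.v 0) + n*n*q*q*r*r*(x.v 0) + (x.v 0)) * h
    · linear_combination (n*p*s*(x.v 1) - n*q*r*(x.v 1) - 2*n*n*p*q*r*s*(x.v 1) + n*n*p*p*s*s*(x.v 1) + n*n*q*q*r*r*(x.v 1) + (x.v 1)) * h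
    · linear_combination (n*p*s*(x.v 2) - n*q*r*(x.v 2) - 2*n*n*p*q*r*s*(x.v 2) + n*n*p*p*s*s*(x.v 2) + n*n*q*q*r*r*(x.v 2) + (x.v 2)) * h
    · linear_combination (n*p*s*x.x2 - n*q*r*x.x2 - 2*n*n*p*q*r*s*x.x2 + n*n*p*p*s*s*x.x2 + n*n*q*q*r*r*x.x2 + x.x2) * h
  right_inv x := by
    refine ext8 _ _ ?_ ?_ ?_ ?_ ?_ ?_ ?_ ?_ <;> simp
    · linear_combination (n*p*s*x.x1 - n*q*r*x.x1 - 2*n*n*p*q*r*s*x.x1 + n*n*p*p*s*s*x.x1 + n*n*q*q*r*r*x.x1 + x.x1) * h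
    · linear_combination (n*p*s*(x.u 0) - n*q*r*(x.u 0) - 2*n*n*p*q*r*s*(x.u 0) + n*n*p*p*s*s*(x.u 0) + n*n*q*q*r*r*(x.u 0) + (x.u 0)) * h
    · linear_combination (n*p*s*(x.u 1) - n*q*r*(x.u 1) - 2*n*n*p*q*r*s*(x.u 1) + n*n*p*p*s*s*(x.u 1) + n*n*q*q*r*r*(x.u 1) + (x.u 1)) * h
    · linear_combination (n*p*s*(x.u 2) - n*q*r*(x.u 2) - 2*n*n*p*q*r*s*(x.u 2) + n*n*p*p*s*s*(x.u 2) + n*n*q*q*r*r*(x.u 2) + (x.u 2)) * h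
    · linear_combination (n*p*s*(x.v 0) - n*q*r*(x.v 0) - 2*n*n*p*q*r*s*(x.v 0) + n*n*p*p*s*s*(x.v 0) + n*n*q*q*r*r*(x.v 0) + (x.v 0)) * h
    · linear_combination (n*p*s*(x.v 1) - n*q*r*(x.v 1) - 2*n*n*p*q*r*s*(x.v 1) + n*n*p*p*s*s*(x.v 1) + n*n*q*q*r*r*(x.v 1) + (x.v 1)) * h
    · linear_combination (n*p*s*(x.v 2) - n*q*r*(x.v 2) - 2*n*n*p*q*r*s*(x.v 2) + n*n*p*p*s*s*(x.v 2) + n*n*q*q*r*r*(x.v 2) + (x.v 2)) * h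
    · linear_combination (n*p*s*x.x2 - n*q*r*x.x2 - 2*n*n*p*q*r*s*x.x2 + n*n*p*p*s*s*x.x2 + n*n*q*q*r*r*x.x2 + x.x2) * h

@[simp] lemma rhoEquiv_apply (h : n * (p*s - q*r) = 1) (x : SplitOctonion F) :
    rhoEquiv p q r s n h x = rhoFun p q r s n x := rfl

lemma rho_isAut (h : n * (p*s - q*r) = 1) : IsAlgAut (rhoEquiv p q r s n h) := by
  constructor
  · refine ext8 _ _ ?_ ?_ ?_ ?_ ?_ ?_ ?_ ?_ <;> simp <;> linear_combination h
  · intro x y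
    refine ext8 _ _ ?_ ?_ ?_ ?_ ?_ ?_ ?_ ?_ <;> simp
    · linear_combination (n*p*r*x.x1*(y.u 0) + n*p*r*(x.u 0)*y.x2 - n*p*r*(x.v 1)*(y.v 2) + n*p*r*(x.v 2)*(y.v 1) - n*p*s*x.x1*y.x1 - n*p*s*(x.u 0)*(y.v 0) - n*p*s*(x.u 1)*(y.v 1) - n*p*s*(x.u 2)*(y.v 2) + n*q*r*(x.v 0)*(y.u 0) + n*q*r*(x.v 1)*(y.u 1) + n*q*r*(x.v 2)*(y.u 2) + n*q*r*x.x2*y.x2 - n*q*s*(x.u 1)*(y.u 2) + n*q*s*(x.u 2)*(y.u 1) - n*q*s*(x.v 0)*y.x1 - n*q*s*x.x2*(y.v 0)) * h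
    · linear_combination (n*p*q*x.x1*y.x1 + n*p*q*(x.u 0)*(y.v 0) + n*p*q*(x.u 1)*(y.v 1) + n*p*q*(x.u 2)*(y.v 2) - n*p*q*(x.v 0)*(y.u 0) - n*p*q*(x.v 1)*(y.u 1) - n*p*q*(x.v 2)*(y.u 2) - n*p*q*x.x2*y.x2 - n*p*p*x.x1*(y.u 0) - n*p*p*(x.u 0)*y.x2 + n*p*p*(x.v 1)*(y.v 2) - n*p*p*(x.v 2)*(y.v 1) + n*q*q*(x.u 1)*(y.u 2) - n*q*q*(x.u 2)*(y.u 1) + n*q*q*(x.v 0)*y.x1 + n*q*q*x.x2*(y.v 0)) * h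
    · linear_combination (n*p*r*(x.u 0)*(y.u 1) - n*p*r*(x.u 1)*(y.u 0) + n*p*r*(x.v 2)*y.x1 + n*p*r*x.x2*(y.v 2) - n*p*s*x.x1*(y.u 1) - n*p*s*(x.u 1)*y.x2 - n*p*s*(x.v 0)*(y.v 2) + n*p*s*(x.v 2)*(y.v 0) + n*q*r*(x.u 0)*(y.u 2) - n*q*r*(x.u 2)*(y.u 0) - n*q*r*(x.v 1)*y.x1 - n*q*r*x.x2*(y.v 1) - n*q*s*x.x1*(y.u 2) - n*q*s*(x.u 2)*y.x2 + n*q*s*(x.v 0)*(y.v 1) - n*q*s*(x.v 1)*(y.v 0)) * h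
    · linear_combination (-n*r*s*x.x1*(y.u 1) + n*r*s*(x.u 0)*(y.u 2) - n*r*s*(x.u 1)*y.x2 - n*r*s*(x.u 2)*(y.u 0) - n*r*s*(x.v 0)*(y.v 2) - n*r*s*(x.v 1)*y.x1 + n*r*s*(x.v 2)*(y.v 0) - n*r*s*x.x2*(y.v 1) + n*r*r*(x.u 0)*(y.u 1) - n*r*r*(x.u 1)*(y.u 0) + n*r*r*(x.v 2)*y.x1 + n*r*r*x.x2*(y.v 2) - n*s*s*x.x1*(y.u 2) - n*s*s*(x.u 2)*y.x2 + n*s*s*(x.v 0)*(y.v 1) - n*s*s*(x.v 1)*(y.v 0)) * h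
    · linear_combination (-n*r*s*x.x1*y.x1 - n*r*s*(x.u 0)*(y.v 0) - n*r*s*(x.u 1)*(y.v 1) - n*r*s*(x.u 2)*(y.v 2) + n*r*s*(x.v 0)*(y.u 0) + n*r*s*(x.v 1)*(y.u 1) + n*r*s*(x.v 2)*(y.u 2) + n*r*s*x.x2*y.x2 + n*r*r*x.x1*(y.u 0) + n*r*r*(x.u 0)*y.x2 - n*r*r*(x.v 1)*(y.v 2) + n*r*r*(x.v 2)*(y.v 1) - n*s*s*(x.u 1)*(y.u 2) + n*s*s*(x.u 2)*(y.u 1) - n*s*s*(x.v 0)*y.x1 - n*s*s*x.x2*(y.v 0)) * h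
    · linear_combination (n*p*r*(x.u 0)*(y.u 1) - n*p*r*(x.u 1)*(y.u 0) + n*p*r*(x.v 2)*y.x1 + n*p*r*x.x2*(y.v 2) + n*p*s*(x.u 0)*(y.u 2) - n*p*s*(x.u 2)*(y.u 0) - n*p*s*(x.v 1)*y.x1 - n*p*s*x.x2*(y.v 1) - n*q*r*x.x1*(y.u 1) - n*q*r*(x.u 1)*y.x2 - n*q*r*(x.v 0)*(y.v 2) + n*q*r*(x.v 2)*(y.v 0) - n*q*s*x.x1*(y.u 2) - n*q*s*(x.u 2)*y.x2 + n*q*s*(x.v 0)*(y.v 1) - n*q*s*(x.v 1)*(y.v 0)) * h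
    · linear_combination (n*p*q*x.x1*(y.u 1) - n*p*q*(x.u 0)*(y.u 2) + n*p*q*(x.u 1)*y.x2 + n*p*q*(x.u 2)*(y.u 0) + n*p*q*(x.v 0)*(y.v 2) + n*p*q*(x.v 1)*y.x1 - n*p*q*(x.v 2)*(y.v 0) + n*p*q*x.x2*(y.v 1) - n*p*p*(x.u 0)*(y.u 1) + n*p*p*(x.u 1)*(y.u 0) - n*p*p*(x.v 2)*y.x1 - n*p*p*x.x2*(y.v 2) + n*q*q*x.x1*(y.u 2) + n*q*q*(x.u 2)*y.x2 - n*q*q*(x.v 0)*(y.v 1) + n*q*q*(x.v 1)*(y.v 0)) * h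
    · linear_combination (-n*p*r*x.x1*(y.u 0) - n*p*r*(x.u 0)*y.x2 + n*p*r*(x.v 1)*(y.v 2) - n*p*r*(x.v 2)*(y.v 1) - n*p*s*(x.v 0)*(y.u 0) - n*p*s*(x.v 1)*(y.u 1) - n*p*s*(x.v 2)*(y.u 2) - n*p*s*x.x2*y.x2 + n*q*r*x.x1*y.x1 + n*q*r*(x.u 0)*(y.v 0) + n*q*r*(x.u 1)*(y.v 1) + n*q*r*(x.u 2)*(y.v 2) + n*q*s*(x.u 1)*(y.u 2) - n*q*s*(x.u 2)*(y.u 1) + n*q*s*(x.v 0)*y.x1 + n*q*s*x.x2*(y.v 0)) * h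

lemma rel_rho (h : n * (p*s - q*r) = 1) (x : SplitOctonion F) :
    Rel x (rhoFun p q r s n x) := ⟨rhoEquiv p q r s n h, rho_isAut p q r s n h, rfl⟩

end SplitOctonion
namespace SplitOctonion
variable {F : Type*} [Field F]

@[simp] lemma vec3_0 (a b c : F) : (![a,b,c] : Fin 3 → F) 0 = a := rfl
@[simp] lemma vec3_1 (a b c : F) : (![a,b,c] : Fin 3 → F) 1 = b := rfl
@[simp] lemma vec3_2 (a b c : F) : (![a,b,c] : Fin 3 → F) 2 = c := rfl

section helpers
variable (a b c d e f g h i : F)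

lemma mv3_dot (hdet : a*(e*i - f*h) - b*(d*i - f*g) + c*(d*h - e*g) = 1)
    (x : SplitOctonion F) :
    (mv3 a b c d e f g h i x).u 0 * (mv3 a b c d e f g h i x).v 0
      + (mv3 a b c d e f g h i x).u 1 * (mv3 a b c d e f g h i x).v 1
      + (mv3 a b c d e f g h i x).u 2 * (mv3 a b c d e f g h i x).v 2
    = x.u 0 * x.v 0 + x.u 1 * x.v 1 + x.u 2 * x.v 2 := by
  simp only [mv3_u0, mv3_u1, mv3_u2, mv3_v0, mv3_v1, mv3_v2]
  linear_combination (x.u 0 * x.v 0 + x.u 1 * x.v 1 + x.u 2 * x.v 2) * hdet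

lemma mv3_v_ne (hdet : a*(e*i - f*h) - b*(d*i - f*g) + c*(d*h - e*g) = 1)
    (x : SplitOctonion F) (hv : x.v ≠ 0) : (mv3 a b c d e f g h i x).v ≠ 0 := by
  intro hz
  apply hv
  have h0 : (mv3 a b c d e f g h i x).v 0 = 0 := by rw [hz]; rfl
  have h1 : (mv3 a b c d e f g h i x).v 1 = 0 := by rw [hz]; rfl
  have h2 : (mv3 a b c d e f g h i x).v 2 = 0 := by rw [hz]; rfl
  simp only [mv3_v0, mv3_v1, mv3_v2] at h0 h1 h2
  funext j
  fin_cases j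
  · show x.v 0 = 0
    linear_combination (-(x.v 0)) * hdet + a * h0 + d * h1 + g * h2
  · show x.v 1 = 0
    linear_combination (-(x.v 1)) * hdet + b * h0 + e * h1 + h * h2
  · show x.v 2 = 0
    linear_combination (-(x.v 2)) * hdet + c * h0 + f * h1 + i * h2

end helpers

/-- Step 1: if `x.u ≠ 0`, we can move `x.u` to `(1,0,0)` by an automorphism fixing the
diagonal, preserving `u·v` (which becomes the new `v 0`) and nonvanishing of `v`. -/
lemma S1 (x : SplitOctonion F) (hu : x.u ≠ 0) :
    ∃ y : SplitOctonion F, Rel x y ∧ y.x1 = x.x1 ∧ y.x2 = x.x2 ∧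
      y.u 0 = 1 ∧ y.u 1 = 0 ∧ y.u 2 = 0 ∧
      y.v 0 = x.u 0 * x.v 0 + x.u 1 * x.v 1 + x.u 2 * x.v 2 ∧
      (x.v ≠ 0 → y.v ≠ 0) := by
  rcases (vec_ne_zero_iff x.u).mp hu with h0 | h1 | h2
  · have hdet : (x.u 0)⁻¹*((-x.u 0)*(-1) - 0*0) - 0*((x.u 1)*(-1) - 0*(x.u 2 / x.u 0))
        + 0*((x.u 1)*0 - (-x.u 0)*(x.u 2 / x.u 0)) = 1 := by field_simp; ring
    have hu0 : (mv3 ((x.u 0)⁻¹) 0 0 (x.u 1) (-x.u 0) 0 (x.u 2 / x.u 0) 0 (-1) x).u 0 = 1 := by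
      simp; field_simp
    have hu1 : (mv3 ((x.u 0)⁻¹) 0 0 (x.u 1) (-x.u 0) 0 (x.u 2 / x.u 0) 0 (-1) x).u 1 = 0 := by
      simp; ring
    have hu2 : (mv3 ((x.u 0)⁻¹) 0 0 (x.u 1) (-x.u 0) 0 (x.u 2 / x.u 0) 0 (-1) x).u 2 = 0 := by
      simp; field_simp; ring
    have hdd := mv3_dot _ _ _ _ _ _ _ _ _ hdet x
    rw [hu0, hu1, hu2] at hdd
    exact ⟨_, rel_sl3 _ _ _ _ _ _ _ _ _ hdet x, rfl, rfl, hu0, hu1, hu2,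
      by linear_combination hdd, fun hv => mv3_v_ne _ _ _ _ _ _ _ _ _ hdet x hv⟩
  · have hdet : 0*((-x.u 0)*(-1) - 0*(x.u 2 / x.u 1)) - (x.u 1)⁻¹*((x.u 1)*(-1) - 0*0)
        + 0*((x.u 1)*(x.u 2 / x.u 1) - (-x.u 0)*0) = 1 := by field_simp; ring
    have hu0 : (mv3 0 ((x.u 1)⁻¹) 0 (x.u 1) (-x.u 0) 0 0 (x.u 2 / x.u 1) (-1) x).u 0 = 1 := by
      simp; field_simp
    have hu1 : (mv3 0 ((x.u 1)⁻¹) 0 (x.u 1) (-x.u 0) 0 0 (x.u 2 / x.u 1) (-1) x).u 1 = 0 := by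
      simp; ring
    have hu2 : (mv3 0 ((x.u 1)⁻¹) 0 (x.u 1) (-x.u 0) 0 0 (x.u 2 / x.u 1) (-1) x).u 2 = 0 := by
      simp; field_simp; ring
    have hdd := mv3_dot _ _ _ _ _ _ _ _ _ hdet x
    rw [hu0, hu1, hu2] at hdd
    exact ⟨_, rel_sl3 _ _ _ _ _ _ _ _ _ hdet x, rfl, rfl, hu0, hu1, hu2,
      by linear_combination hdd, fun hv => mv3_v_ne _ _ _ _ _ _ _ _ _ hdet x hv⟩
  · have hdet : 0*(0*(-x.u 1) - (-x.u 0 / x.u 2)*(x.u 2)) - 0*(1*(-x.u 1)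
        - (-x.u 0 / x.u 2)*0) + (x.u 2)⁻¹*(1*(x.u 2) - 0*0) = 1 := by field_simp; ring
    have hu0 : (mv3 0 0 ((x.u 2)⁻¹) 1 0 (-x.u 0 / x.u 2) 0 (x.u 2) (-x.u 1) x).u 0 = 1 := by
      simp; field_simp
    have hu1 : (mv3 0 0 ((x.u 2)⁻¹) 1 0 (-x.u 0 / x.u 2) 0 (x.u 2) (-x.u 1) x).u 1 = 0 := by
      simp; field_simp; ring
    have hu2 : (mv3 0 0 ((x.u 2)⁻¹) 1 0 (-x.u 0 / x.u 2) 0 (x.u 2) (-x.u 1) x).u 2 = 0 := by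
      simp; ring
    have hdd := mv3_dot _ _ _ _ _ _ _ _ _ hdet x
    rw [hu0, hu1, hu2] at hdd
    exact ⟨_, rel_sl3 _ _ _ _ _ _ _ _ _ hdet x, rfl, rfl, hu0, hu1, hu2,
      by linear_combination hdd, fun hv => mv3_v_ne _ _ _ _ _ _ _ _ _ hdet x hv⟩

/-- Step 2 (shear): if `x.u = (1,0,0)` and `x.v 0 ≠ 0`, kill `v 1, v 2`. -/
lemma S2 (x : SplitOctonion F) (hu0 : x.u 0 = 1) (hu1 : x.u 1 = 0) (hu2 : x.u 2 = 0)
    (hk : x.v 0 ≠ 0) :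
    ∃ y : SplitOctonion F, Rel x y ∧ y.x1 = x.x1 ∧ y.x2 = x.x2 ∧
      y.u 0 = 1 ∧ y.u 1 = 0 ∧ y.u 2 = 0 ∧
      y.v 0 = x.v 0 ∧ y.v 1 = 0 ∧ y.v 2 = 0 := by
  have hdet : 1*(1*1 - 0*0) - (x.v 1 / x.v 0)*(0*1 - 0*0)
      + (x.v 2 / x.v 0)*(0*0 - 1*0) = 1 := by ring
  refine ⟨mv3 1 (x.v 1 / x.v 0) (x.v 2 / x.v 0) 0 1 0 0 0 1 x,
    rel_sl3 _ _ _ _ _ _ _ _ _ hdet x, rfl, rfl, ?_, ?_, ?_, ?_, ?_, ?_⟩ <;>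
    · simp [hu0, hu1, hu2]; (try field_simp); (try ring)

/-- Step 2′: if `x.u = (1,0,0)`, `x.v 0 = 0` but `x.v ≠ 0`, bring `v` to `(0,1,0)`. -/
lemma S2' (x : SplitOctonion F) (hu0 : x.u 0 = 1) (hu1 : x.u 1 = 0) (hu2 : x.u 2 = 0)
    (hk : x.v 0 = 0) (hv : x.v 1 ≠ 0 ∨ x.v 2 ≠ 0) :
    ∃ y : SplitOctonion F, Rel x y ∧ y.x1 = x.x1 ∧ y.x2 = x.x2 ∧
      y.u 0 = 1 ∧ y.u 1 = 0 ∧ y.u 2 = 0 ∧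
      y.v 0 = 0 ∧ y.v 1 = 1 ∧ y.v 2 = 0 := by
  rcases hv with hm | hm
  · have hdet : 1*((x.v 1)*(x.v 1)⁻¹ - (x.v 2)*0) - 0*(0*(x.v 1)⁻¹ - (x.v 2)*0)
        + 0*(0*0 - (x.v 1)*0) = 1 := by field_simp; ring
    refine ⟨mv3 1 0 0 0 (x.v 1) (x.v 2) 0 0 ((x.v 1)⁻¹) x,
      rel_sl3 _ _ _ _ _ _ _ _ _ hdet x, rfl, rfl, ?_, ?_, ?_, ?_, ?_, ?_⟩ <;>
      · simp [hu0, hu1, hu2, hk]; (try field_simp); (try ring)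
  · have hdet : 1*((x.v 1)*0 - (x.v 2)*(-(x.v 2)⁻¹)) - 0*(0*0 - (x.v 2)*0)
        + 0*(0*(-(x.v 2)⁻¹) - (x.v 1)*0) = 1 := by field_simp; ring
    refine ⟨mv3 1 0 0 0 (x.v 1) (x.v 2) 0 (-(x.v 2)⁻¹) 0 x,
      rel_sl3 _ _ _ _ _ _ _ _ _ hdet x, rfl, rfl, ?_, ?_, ?_, ?_, ?_, ?_⟩ <;>
      · simp [hu0, hu1, hu2, hk]; (try field_simp); (try ring)

/-- Step 3: if `x.u = 0` and `x.v ≠ 0`, bring `v` to `(1,0,0)`. -/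
lemma S3 (x : SplitOctonion F) (hu : x.u = 0) (hv : x.v ≠ 0) :
    ∃ y : SplitOctonion F, Rel x y ∧ y.x1 = x.x1 ∧ y.x2 = x.x2 ∧
      (∀ j, y.u j = 0) ∧ y.v 0 = 1 ∧ y.v 1 = 0 ∧ y.v 2 = 0 := by
  have hu' : ∀ j, x.u j = 0 := fun j => by rw [hu]; rfl
  rcases (vec_ne_zero_iff x.v).mp hv with h0 | h1 | h2
  · have hdet : (x.v 0)*(1*(x.v 0)⁻¹ - 0*0) - (x.v 1)*(0*(x.v 0)⁻¹ - 0*0)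
        + (x.v 2)*(0*0 - 1*0) = 1 := by field_simp; ring
    refine ⟨mv3 (x.v 0) (x.v 1) (x.v 2) 0 1 0 0 0 ((x.v 0)⁻¹) x,
      rel_sl3 _ _ _ _ _ _ _ _ _ hdet x, rfl, rfl, fun j => ?_, ?_, ?_, ?_⟩
    · fin_cases j <;> · simp [hu']; (try ring)
    all_goals · simp [hu']; (try field_simp); (try ring)
  · have hdet : (x.v 0)*(0*(-(x.v 1)⁻¹) - 0*0) - (x.v 1)*(1*(-(x.v 1)⁻¹) - 0*0)
        + (x.v 2)*(1*0 - 0*0) = 1 := by field_simp; ring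
    refine ⟨mv3 (x.v 0) (x.v 1) (x.v 2) 1 0 0 0 0 (-(x.v 1)⁻¹) x,
      rel_sl3 _ _ _ _ _ _ _ _ _ hdet x, rfl, rfl, fun j => ?_, ?_, ?_, ?_⟩
    · fin_cases j <;> · simp [hu']; (try ring)
    all_goals · simp [hu']; (try field_simp); (try ring)
  · have hdet : (x.v 0)*(0*0 - 0*((x.v 2)⁻¹)) - (x.v 1)*(1*0 - 0*0)
        + (x.v 2)*(1*((x.v 2)⁻¹) - 0*0) = 1 := by field_simp; ring
    refine ⟨mv3 (x.v 0) (x.v 1) (x.v 2) 1 0 0 0 ((x.v 2)⁻¹) 0 x,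
      rel_sl3 _ _ _ _ _ _ _ _ _ hdet x, rfl, rfl, fun j => ?_, ?_, ?_, ?_⟩
    · fin_cases j <;> · simp [hu']; (try ring)
    all_goals · simp [hu']; (try field_simp); (try ring)

end SplitOctonion
namespace SplitOctonion
variable {F : Type*} [Field F]

open SplitOctonion

lemma relQ_idem (α : F) (hα : α ≠ 0) :
    Rel (e1 : SplitOctonion F) ⟨α, ![1,0,0], ![α - α*α,0,0], 1 - α⟩ := by
  have h : (-(α⁻¹)) * (α*(-α) - 1*(α - α*α)) = 1 := by field_simp; ring
  have hr := rel_rho α 1 (α - α*α) (-α) (-(α⁻¹)) h (e1 : SplitOctonion F)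
  rwa [show rhoFun α 1 (α - α*α) (-α) (-(α⁻¹)) (e1 : SplitOctonion F)
      = ⟨α, ![1,0,0], ![α - α*α,0,0], 1 - α⟩ from by
    refine ext8 _ _ ?_ ?_ ?_ ?_ ?_ ?_ ?_ ?_ <;> simp <;> field_simp <;> ring] at hr

lemma relQ_idem0 : Rel (e1 : SplitOctonion F) ⟨0, ![1,0,0], ![0,0,0], 1⟩ := by
  have h : (-1 : F) * (1*0 - 1*1) = 1 := by norm_num
  have hr := rel_rho 1 1 1 0 (-1) h (e1 : SplitOctonion F)
  rwa [show rhoFun (1:F) 1 1 0 (-1) (e1 : SplitOctonion F) = ⟨0, ![1,0,0], ![0,0,0], 1⟩ from by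
    refine ext8 _ _ ?_ ?_ ?_ ?_ ?_ ?_ ?_ ?_ <;> simp] at hr

lemma relQ_idem1 : Rel (e1 : SplitOctonion F) ⟨1, ![1,0,0], ![0,0,0], 0⟩ := by
  have h : (-1 : F) * (1*(-1) - 1*0) = 1 := by norm_num
  have hr := rel_rho 1 1 0 (-1) (-1) h (e1 : SplitOctonion F)
  rwa [show rhoFun (1:F) 1 0 (-1) (-1) (e1 : SplitOctonion F) = ⟨1, ![1,0,0], ![0,0,0], 0⟩ from by
    refine ext8 _ _ ?_ ?_ ?_ ?_ ?_ ?_ ?_ ?_ <;> simp] at hr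

lemma relQ_idem2 : Rel (e1 : SplitOctonion F) ⟨1, ![0,0,0], ![1,0,0], 0⟩ := by
  have h : (1 : F) * (1*1 - 0*1) = 1 := by norm_num
  have hr := rel_rho 1 0 1 1 1 h (e1 : SplitOctonion F)
  rwa [show rhoFun (1:F) 0 1 1 1 (e1 : SplitOctonion F) = ⟨1, ![0,0,0], ![1,0,0], 0⟩ from by
    refine ext8 _ _ ?_ ?_ ?_ ?_ ?_ ?_ ?_ ?_ <;> simp] at hr

lemma relQ_idem3 : Rel (e1 : SplitOctonion F) ⟨0, ![0,0,0], ![1,0,0], 1⟩ := by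
  have h : (-1 : F) * (0*(-1) - 1*1) = 1 := by norm_num
  have hr := rel_rho 0 1 1 (-1) (-1) h (e1 : SplitOctonion F)
  rwa [show rhoFun (0:F) 1 1 (-1) (-1) (e1 : SplitOctonion F) = ⟨0, ![0,0,0], ![1,0,0], 1⟩ from by
    refine ext8 _ _ ?_ ?_ ?_ ?_ ?_ ?_ ?_ ?_ <;> simp] at hr

lemma relQ_e2 : Rel (e1 : SplitOctonion F) e2 := by
  have hr := rel_tau (e1 : SplitOctonion F)
  rwa [show tauFun (e1 : SplitOctonion F) = e2 from by
    refine ext8 _ _ ?_ ?_ ?_ ?_ ?_ ?_ ?_ ?_ <;> simp] at hr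

lemma relQ_nil (α : F) :
    Rel (u1 : SplitOctonion F) ⟨α, ![1,0,0], ![-(α*α),0,0], -α⟩ := by
  have h : (1:F) * (1*1 - 0*(-α)) = 1 := by norm_num
  have hr := rel_rho 1 0 (-α) 1 1 h (u1 : SplitOctonion F)
  rwa [show rhoFun (1:F) 0 (-α) 1 1 (u1 : SplitOctonion F)
      = ⟨α, ![1,0,0], ![-(α*α),0,0], -α⟩ from by
    refine ext8 _ _ ?_ ?_ ?_ ?_ ?_ ?_ ?_ ?_ <;> simp <;> ring] at hr

lemma relQ_nil2 : Rel (u1 : SplitOctonion F) ⟨0, ![0,0,0], ![1,0,0], 0⟩ := by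
  have h : (-1:F) * (0*0 - 1*1) = 1 := by norm_num
  have hr := rel_rho 0 1 1 0 (-1) h (u1 : SplitOctonion F)
  rwa [show rhoFun (0:F) 1 1 0 (-1) (u1 : SplitOctonion F) = ⟨0, ![0,0,0], ![1,0,0], 0⟩ from by
    refine ext8 _ _ ?_ ?_ ?_ ?_ ?_ ?_ ?_ ?_ <;> simp] at hr

/-- the word `W1`: `e₁ ↦ (1, e₁; e₂, 0)` -/
lemma relE : Rel (e1 : SplitOctonion F) ⟨1, ![1,0,0], ![0,1,0], 0⟩ := by
  have s1 : Rel (e1 : SplitOctonion F) ⟨1, ![0,0,0], ![1,0,0], 0⟩ := relQ_idem2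
  have s2 : Rel (⟨1, ![0,0,0], ![1,0,0], 0⟩ : SplitOctonion F) ⟨1, ![0,0,0], ![1,1,0], 0⟩ := by
    have hd : (1:F)*(1*1 - 0*0) - (-1)*(0*1 - 0*0) + 0*(0*0 - 1*0) = 1 := by norm_num
    have hr := rel_sl3 1 (-1) 0 0 1 0 0 0 1 hd (⟨1, ![0,0,0], ![1,0,0], 0⟩ : SplitOctonion F)
    rwa [show mv3 (1:F) (-1) 0 0 1 0 0 0 1 (⟨1, ![0,0,0], ![1,0,0], 0⟩ : SplitOctonion F)
        = ⟨1, ![0,0,0], ![1,1,0], 0⟩ from by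
      refine ext8 _ _ ?_ ?_ ?_ ?_ ?_ ?_ ?_ ?_ <;> simp] at hr
  have s3 : Rel (⟨1, ![0,0,0], ![1,1,0], 0⟩ : SplitOctonion F) ⟨1, ![0,0,0], ![1,1,-1], 0⟩ := by
    have hd : (1:F)*(1*1 - 0*0) - 0*(0*1 - 0*0) + 1*(0*0 - 1*0) = 1 := by norm_num
    have hr := rel_sl3 1 0 1 0 1 0 0 0 1 hd (⟨1, ![0,0,0], ![1,1,0], 0⟩ : SplitOctonion F)
    rwa [show mv3 (1:F) 0 1 0 1 0 0 0 1 (⟨1, ![0,0,0], ![1,1,0], 0⟩ : SplitOctonion F)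
        = ⟨1, ![0,0,0], ![1,1,-1], 0⟩ from by
      refine ext8 _ _ ?_ ?_ ?_ ?_ ?_ ?_ ?_ ?_ <;> simp] at hr
  have s4 : Rel (⟨1, ![0,0,0], ![1,1,-1], 0⟩ : SplitOctonion F) ⟨1, ![0,0,0], ![0,1,-1], 0⟩ := by
    have hd : (1:F)*(1*1 - 0*0) - 0*(1*1 - 0*0) + 0*(1*0 - 1*0) = 1 := by norm_num
    have hr := rel_sl3 1 0 0 1 1 0 0 0 1 hd (⟨1, ![0,0,0], ![1,1,-1], 0⟩ : SplitOctonion F)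
    rwa [show mv3 (1:F) 0 0 1 1 0 0 0 1 (⟨1, ![0,0,0], ![1,1,-1], 0⟩ : SplitOctonion F)
        = ⟨1, ![0,0,0], ![0,1,-1], 0⟩ from by
      refine ext8 _ _ ?_ ?_ ?_ ?_ ?_ ?_ ?_ ?_ <;> simp] at hr
  have s5 : Rel (⟨1, ![0,0,0], ![0,1,-1], 0⟩ : SplitOctonion F) ⟨1, ![1,0,0], ![0,1,0], 0⟩ := by
    have h : (1:F) * (1*1 - (-1)*0) = 1 := by norm_num
    have hr := rel_rho 1 (-1) 0 1 1 h (⟨1, ![0,0,0], ![0,1,-1], 0⟩ : SplitOctonion F)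
    rwa [show rhoFun (1:F) (-1) 0 1 1 (⟨1, ![0,0,0], ![0,1,-1], 0⟩ : SplitOctonion F)
        = ⟨1, ![1,0,0], ![0,1,0], 0⟩ from by
      refine ext8 _ _ ?_ ?_ ?_ ?_ ?_ ?_ ?_ ?_ <;> simp] at hr
  exact ((s1.trans s2).trans s3).trans (s4.trans s5)

/-- the word `W2`: `u₁ ↦ (0, e₁; e₂, 0)` -/
lemma relN : Rel (u1 : SplitOctonion F) ⟨0, ![1,0,0], ![0,1,0], 0⟩ := by
  have s1 : Rel (u1 : SplitOctonion F) ⟨0, ![1,-1,0], ![0,0,0], 0⟩ := by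
    have hd : (1:F)*(1*1 - 0*0) - 0*((-1)*1 - 0*0) + 0*((-1)*0 - 1*0) = 1 := by norm_num
    have hr := rel_sl3 1 0 0 (-1) 1 0 0 0 1 hd (u1 : SplitOctonion F)
    rwa [show mv3 (1:F) 0 0 (-1) 1 0 0 0 1 (u1 : SplitOctonion F)
        = ⟨0, ![1,-1,0], ![0,0,0], 0⟩ from by
      refine ext8 _ _ ?_ ?_ ?_ ?_ ?_ ?_ ?_ ?_ <;> simp] at hr
  have s2 : Rel (⟨0, ![1,-1,0], ![0,0,0], 0⟩ : SplitOctonion F) ⟨0, ![1,-1,1], ![0,0,0], 0⟩ := by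
    have hd : (1:F)*(1*1 - 0*0) - 0*(0*1 - 0*1) + 0*(0*0 - 1*1) = 1 := by norm_num
    have hr := rel_sl3 1 0 0 0 1 0 1 0 1 hd (⟨0, ![1,-1,0], ![0,0,0], 0⟩ : SplitOctonion F)
    rwa [show mv3 (1:F) 0 0 0 1 0 1 0 1 (⟨0, ![1,-1,0], ![0,0,0], 0⟩ : SplitOctonion F)
        = ⟨0, ![1,-1,1], ![0,0,0], 0⟩ from by
      refine ext8 _ _ ?_ ?_ ?_ ?_ ?_ ?_ ?_ ?_ <;> simp] at hr
  have s3 : Rel (⟨0, ![1,-1,1], ![0,0,0], 0⟩ : SplitOctonion F) ⟨0, ![1,0,1], ![0,1,0], 0⟩ := by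
    have h : (1:F) * (1*1 - 1*0) = 1 := by norm_num
    have hr := rel_rho 1 1 0 1 1 h (⟨0, ![1,-1,1], ![0,0,0], 0⟩ : SplitOctonion F)
    rwa [show rhoFun (1:F) 1 0 1 1 (⟨0, ![1,-1,1], ![0,0,0], 0⟩ : SplitOctonion F)
        = ⟨0, ![1,0,1], ![0,1,0], 0⟩ from by
      refine ext8 _ _ ?_ ?_ ?_ ?_ ?_ ?_ ?_ ?_ <;> simp] at hr
  have s4 : Rel (⟨0, ![1,0,1], ![0,1,0], 0⟩ : SplitOctonion F) ⟨0, ![1,0,0], ![0,1,0], 0⟩ := by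
    have hd : (1:F)*(1*1 - 0*0) - 0*(0*1 - 0*(-1)) + 0*(0*0 - 1*(-1)) = 1 := by norm_num
    have hr := rel_sl3 1 0 0 0 1 0 (-1) 0 1 hd (⟨0, ![1,0,1], ![0,1,0], 0⟩ : SplitOctonion F)
    rwa [show mv3 (1:F) 0 0 0 1 0 (-1) 0 1 (⟨0, ![1,0,1], ![0,1,0], 0⟩ : SplitOctonion F)
        = ⟨0, ![1,0,0], ![0,1,0], 0⟩ from by
      refine ext8 _ _ ?_ ?_ ?_ ?_ ?_ ?_ ?_ ?_ <;> simp] at hr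
  exact ((s1.trans s2).trans s3).trans s4

end SplitOctonion
namespace SplitOctonion
variable {F : Type*} [Field F]

/-- the word `W3`: `e₁ ↦ (0, e₁; e₂, 1)` -/
lemma relE2 : Rel (e1 : SplitOctonion F) ⟨0, ![1,0,0], ![0,1,0], 1⟩ := by
  have s1 : Rel (e1 : SplitOctonion F) ⟨1, ![0,0,0], ![1,0,0], 0⟩ := relQ_idem2
  have s2 : Rel (⟨1, ![0,0,0], ![1,0,0], 0⟩ : SplitOctonion F) ⟨1, ![0,0,0], ![1,1,0], 0⟩ := by
    have hd : (1:F)*(1*1 - 0*0) - (-1)*(0*1 - 0*0) + 0*(0*0 - 1*0) = 1 := by norm_num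
    have hr := rel_sl3 1 (-1) 0 0 1 0 0 0 1 hd (⟨1, ![0,0,0], ![1,0,0], 0⟩ : SplitOctonion F)
    rwa [show mv3 (1:F) (-1) 0 0 1 0 0 0 1 (⟨1, ![0,0,0], ![1,0,0], 0⟩ : SplitOctonion F)
        = ⟨1, ![0,0,0], ![1,1,0], 0⟩ from by
      refine ext8 _ _ ?_ ?_ ?_ ?_ ?_ ?_ ?_ ?_ <;> simp] at hr
  have s3 : Rel (⟨1, ![0,0,0], ![1,1,0], 0⟩ : SplitOctonion F) ⟨0, ![0,0,0], ![1,1,1], 1⟩ := by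
    have h : (1:F) * (1*1 - (-1)*0) = 1 := by norm_num
    have hr := rel_rho 1 (-1) 0 1 1 h (⟨1, ![0,0,0], ![1,1,0], 0⟩ : SplitOctonion F)
    rwa [show rhoFun (1:F) (-1) 0 1 1 (⟨1, ![0,0,0], ![1,1,0], 0⟩ : SplitOctonion F)
        = ⟨0, ![0,0,0], ![1,1,1], 1⟩ from by
      refine ext8 _ _ ?_ ?_ ?_ ?_ ?_ ?_ ?_ ?_ <;> simp] at hr
  have s4 : Rel (⟨0, ![0,0,0], ![1,1,1], 1⟩ : SplitOctonion F) ⟨0, ![0,0,0], ![0,1,1], 1⟩ := by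
    have hd : (1:F)*(1*1 - 0*0) - 0*(1*1 - 0*0) + 0*(1*0 - 1*0) = 1 := by norm_num
    have hr := rel_sl3 1 0 0 1 1 0 0 0 1 hd (⟨0, ![0,0,0], ![1,1,1], 1⟩ : SplitOctonion F)
    rwa [show mv3 (1:F) 0 0 1 1 0 0 0 1 (⟨0, ![0,0,0], ![1,1,1], 1⟩ : SplitOctonion F)
        = ⟨0, ![0,0,0], ![0,1,1], 1⟩ from by
      refine ext8 _ _ ?_ ?_ ?_ ?_ ?_ ?_ ?_ ?_ <;> simp] at hr
  have s5 : Rel (⟨0, ![0,0,0], ![0,1,1], 1⟩ : SplitOctonion F) ⟨0, ![1,0,0], ![0,1,0], 1⟩ := by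
    have h : (1:F) * (1*1 - 1*0) = 1 := by norm_num
    have hr := rel_rho 1 1 0 1 1 h (⟨0, ![0,0,0], ![0,1,1], 1⟩ : SplitOctonion F)
    rwa [show rhoFun (1:F) 1 0 1 1 (⟨0, ![0,0,0], ![0,1,1], 1⟩ : SplitOctonion F)
        = ⟨0, ![1,0,0], ![0,1,0], 1⟩ from by
      refine ext8 _ _ ?_ ?_ ?_ ?_ ?_ ?_ ?_ ?_ <;> simp] at hr
  exact ((s1.trans s2).trans s3).trans (s4.trans s5)

/-- every idempotent of trace 1 is in the orbit of `e₁` -/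
lemma reach_idem (x : SplitOctonion F) (hI : x * x = x) (htr : x.x1 + x.x2 = 1) :
    Rel (e1 : SplitOctonion F) x := by
  have hdot := congrArg SplitOctonion.x1 hI
  rw [mul_x1] at hdot
  have hx2 : x.x2 = 1 - x.x1 := by linear_combination htr
  by_cases hu : x.u = 0
  · have hu' : ∀ j, x.u j = 0 := fun j => by rw [hu]; rfl
    have hq : x.x1 * x.x1 = x.x1 := by
      rw [hu' 0, hu' 1, hu' 2] at hdot; linear_combination hdot
    have h01 : x.x1 = 0 ∨ x.x1 = 1 := by
      rcases mul_eq_zero.mp (show x.x1 * (x.x1 - 1) = 0 by linear_combination hq) with h | h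
      · exact Or.inl h
      · exact Or.inr (by linear_combination h)
    by_cases hv : x.v = 0
    · have hv' : ∀ j, x.v j = 0 := fun j => by rw [hv]; rfl
      rcases h01 with h | h
      · rw [show x = e2 from by
          refine ext8 _ _ ?_ ?_ ?_ ?_ ?_ ?_ ?_ ?_ <;> simp [hu', hv', h, hx2]]
        exact relQ_e2
      · rw [show x = e1 from by
          refine ext8 _ _ ?_ ?_ ?_ ?_ ?_ ?_ ?_ ?_ <;> simp [hu', hv', h, hx2]]
        exact Rel.refl _
    · obtain ⟨y, hxy, hy1, hy2, hyu, hyv0, hyv1, hyv2⟩ := S3 x hu hv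
      rcases h01 with h | h
      · have hyval : y = ⟨0, ![0,0,0], ![1,0,0], 1⟩ := by
          refine ext8 _ _ ?_ ?_ ?_ ?_ ?_ ?_ ?_ ?_ <;>
            simp [hyu, hyv0, hyv1, hyv2, hy1, hy2, h, hx2]
        rw [hyval] at hxy
        exact relQ_idem3.trans hxy.symm
      · have hyval : y = ⟨1, ![0,0,0], ![1,0,0], 0⟩ := by
          refine ext8 _ _ ?_ ?_ ?_ ?_ ?_ ?_ ?_ ?_ <;>
            simp [hyu, hyv0, hyv1, hyv2, hy1, hy2, h, hx2]
        rw [hyval] at hxy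
        exact relQ_idem2.trans hxy.symm
  · obtain ⟨y, hxy, hy1, hy2, hyu0, hyu1, hyu2, hyv0, _⟩ := S1 x hu
    by_cases hk : y.v 0 = 0
    · have h01 : x.x1 = 0 ∨ x.x1 = 1 := by
        have hD : x.x1 * x.x1 = x.x1 := by
          rw [hk] at hyv0; linear_combination hdot + hyv0
        rcases mul_eq_zero.mp (show x.x1 * (x.x1 - 1) = 0 by linear_combination hD) with h | h
        · exact Or.inl h
        · exact Or.inr (by linear_combination h)
      by_cases hv12 : y.v 1 = 0 ∧ y.v 2 = 0
      · rcases h01 with h | h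
        · have hyval : y = ⟨0, ![1,0,0], ![0,0,0], 1⟩ := by
            refine ext8 _ _ ?_ ?_ ?_ ?_ ?_ ?_ ?_ ?_ <;>
              simp [hyu0, hyu1, hyu2, hk, hv12.1, hv12.2, hy1, hy2, h, hx2]
          rw [hyval] at hxy
          exact relQ_idem0.trans hxy.symm
        · have hyval : y = ⟨1, ![1,0,0], ![0,0,0], 0⟩ := by
            refine ext8 _ _ ?_ ?_ ?_ ?_ ?_ ?_ ?_ ?_ <;>
              simp [hyu0, hyu1, hyu2, hk, hv12.1, hv12.2, hy1, hy2, h, hx2]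
          rw [hyval] at hxy
          exact relQ_idem1.trans hxy.symm
      · have hv12' : y.v 1 ≠ 0 ∨ y.v 2 ≠ 0 := by tauto
        obtain ⟨z, hyz, hz1, hz2, hzu0, hzu1, hzu2, hzv0, hzv1, hzv2⟩ :=
          S2' y hyu0 hyu1 hyu2 hk hv12'
        rcases h01 with h | h
        · have hzval : z = ⟨0, ![1,0,0], ![0,1,0], 1⟩ := by
            refine ext8 _ _ ?_ ?_ ?_ ?_ ?_ ?_ ?_ ?_ <;>
              simp [hzu0, hzu1, hzu2, hzv0, hzv1, hzv2, hz1, hz2, hy1, hy2, h, hx2]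
          rw [hzval] at hyz
          exact (relE2.trans hyz.symm).trans hxy.symm
        · have hzval : z = ⟨1, ![1,0,0], ![0,1,0], 0⟩ := by
            refine ext8 _ _ ?_ ?_ ?_ ?_ ?_ ?_ ?_ ?_ <;>
              simp [hzu0, hzu1, hzu2, hzv0, hzv1, hzv2, hz1, hz2, hy1, hy2, h, hx2]
          rw [hzval] at hyz
          exact (relE.trans hyz.symm).trans hxy.symm
    · have hα : x.x1 ≠ 0 := by
        intro h0
        apply hk
        rw [hyv0]; linear_combination hdot + (1 - x.x1) * h0
      obtain ⟨z, hyz, hz1, hz2, hzu0, hzu1, hzu2, hzv0, hzv1, hzv2⟩ :=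
        S2 y hyu0 hyu1 hyu2 hk
      have hzval : z = ⟨x.x1, ![1,0,0], ![x.x1 - x.x1*x.x1,0,0], 1 - x.x1⟩ := by
        refine ext8 _ _ ?_ ?_ ?_ ?_ ?_ ?_ ?_ ?_ <;>
          simp [hzu0, hzu1, hzu2, hzv0, hzv1, hzv2, hz1, hz2, hy1, hy2, hyv0, hx2]
        linear_combination hdot
      rw [hzval] at hyz
      exact ((relQ_idem x.x1 hα).trans hyz.symm).trans hxy.symm

/-- every nonzero square-zero element is in the orbit of `u₁` -/
lemma reach_nil (x : SplitOctonion F) (hsq : x * x = 0) (hne : x ≠ 0) :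
    Rel (u1 : SplitOctonion F) x := by
  have hS := sq_eq x
  rw [hsq] at hS
  -- components of 0 = t•x - q•1
  have c1 := congrArg SplitOctonion.x1 hS
  have c2 := congrArg SplitOctonion.x2 hS
  have cu : ∀ j, (0:F) = trO x * x.u j := fun j => by
    have := congrArg (fun z => SplitOctonion.u z j) hS; simpa using this
  have cv : ∀ j, (0:F) = trO x * x.v j := fun j => by
    have := congrArg (fun z => SplitOctonion.v z j) hS; simpa using this
  simp only [zero_x1, zero_x2, sub_x1, sub_x2, smul_x1, smul_x2, one_x1, one_x2, mul_one] at c1 c2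
  by_cases ht : trO x = 0
  · -- trace zero, and from c1 : norm zero
    have hq : normO x = 0 := by rw [ht] at c1; linear_combination c1
    have ht' : x.x1 + x.x2 = 0 := ht
    have hx2 : x.x2 = -x.x1 := by linear_combination ht'
    have hq' : x.x1 * x.x2 - (x.u 0 * x.v 0 + x.u 1 * x.v 1 + x.u 2 * x.v 2) = 0 := hq
    have hdot : x.u 0 * x.v 0 + x.u 1 * x.v 1 + x.u 2 * x.v 2 = -(x.x1 * x.x1) := by
      linear_combination -hq' + x.x1 * hx2
    by_cases hu : x.u = 0
    · have hu' : ∀ j, x.u j = 0 := fun j => by rw [hu]; rfl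
      have hα : x.x1 = 0 := by
        have h' : -(x.x1 * x.x1) = 0 := by rw [← hdot, hu' 0, hu' 1, hu' 2]; ring
        exact mul_self_eq_zero.mp (by linear_combination -h')
      by_cases hv : x.v = 0
      · exfalso
        apply hne
        have hv' : ∀ j, x.v j = 0 := fun j => by rw [hv]; rfl
        refine ext8 _ _ ?_ ?_ ?_ ?_ ?_ ?_ ?_ ?_ <;> simp [hu', hv', hα, hx2]
      · obtain ⟨y, hxy, hy1, hy2, hyu, hyv0, hyv1, hyv2⟩ := S3 x hu hv
        have hyval : y = ⟨0, ![0,0,0], ![1,0,0], 0⟩ := by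
          refine ext8 _ _ ?_ ?_ ?_ ?_ ?_ ?_ ?_ ?_ <;>
            simp [hyu, hyv0, hyv1, hyv2, hy1, hy2, hα, hx2]
        rw [hyval] at hxy
        exact relQ_nil2.trans hxy.symm
    · obtain ⟨y, hxy, hy1, hy2, hyu0, hyu1, hyu2, hyv0, _⟩ := S1 x hu
      by_cases hα : x.x1 = 0
      · have hk : y.v 0 = 0 := by rw [hyv0, hdot, hα]; ring
        by_cases hv12 : y.v 1 = 0 ∧ y.v 2 = 0
        · have hyval : y = u1 := by
            refine ext8 _ _ ?_ ?_ ?_ ?_ ?_ ?_ ?_ ?_ <;>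
              simp [hyu0, hyu1, hyu2, hk, hv12.1, hv12.2, hy1, hy2, hα, hx2]
          rw [hyval] at hxy
          exact hxy.symm
        · have hv12' : y.v 1 ≠ 0 ∨ y.v 2 ≠ 0 := by tauto
          obtain ⟨z, hyz, hz1, hz2, hzu0, hzu1, hzu2, hzv0, hzv1, hzv2⟩ :=
            S2' y hyu0 hyu1 hyu2 hk hv12'
          have hzval : z = ⟨0, ![1,0,0], ![0,1,0], 0⟩ := by
            refine ext8 _ _ ?_ ?_ ?_ ?_ ?_ ?_ ?_ ?_ <;>
              simp [hzu0, hzu1, hzu2, hzv0, hzv1, hzv2, hz1, hz2, hy1, hy2, hα, hx2]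
          rw [hzval] at hyz
          exact (relN.trans hyz.symm).trans hxy.symm
      · have hk : y.v 0 ≠ 0 := by
          rw [hyv0, hdot]
          intro h
          exact hα (mul_self_eq_zero.mp (by linear_combination -h))
        obtain ⟨z, hyz, hz1, hz2, hzu0, hzu1, hzu2, hzv0, hzv1, hzv2⟩ :=
          S2 y hyu0 hyu1 hyu2 hk
        have hzval : z = ⟨x.x1, ![1,0,0], ![-(x.x1 * x.x1),0,0], -x.x1⟩ := by
          refine ext8 _ _ ?_ ?_ ?_ ?_ ?_ ?_ ?_ ?_ <;>
            simp [hzu0, hzu1, hzu2, hzv0, hzv1, hzv2, hz1, hz2, hy1, hy2, hyv0, hdot, hx2]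
        rw [hzval] at hyz
        exact ((relQ_nil x.x1).trans hyz.symm).trans hxy.symm
  · -- trace nonzero: x is a scalar, contradiction with x*x = 0, x ≠ 0
    exfalso
    have hu' : ∀ j, x.u j = 0 := fun j =>
      (mul_eq_zero.mp (cu j).symm).resolve_left ht
    have hv' : ∀ j, x.v j = 0 := fun j =>
      (mul_eq_zero.mp (cv j).symm).resolve_left ht
    -- c1 : 0 = trO x * x.x1 - normO x , c2 : 0 = trO x * x.x2 - normO x
    have h12 : x.x1 = x.x2 := by
      have h' : trO x * (x.x1 - x.x2) = 0 := by linear_combination c2 - c1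
      rcases mul_eq_zero.mp h' with h'' | h''
      · exact absurd h'' ht
      · linear_combination h''
    have hsq1 := congrArg SplitOctonion.x1 hsq
    rw [mul_x1, zero_x1] at hsq1
    rw [hu' 0, hu' 1, hu' 2] at hsq1
    have h0 : x.x1 = 0 := mul_self_eq_zero.mp (by linear_combination hsq1)
    apply hne
    refine ext8 _ _ ?_ ?_ ?_ ?_ ?_ ?_ ?_ ?_ <;> simp [hu', hv', h0, ← h12]

end SplitOctonion
namespace SplitOctonion
variable {F : Type*} [Field F]

lemma smul_mul'' (c : F) (x y : SplitOctonion F) : (c • x) * y = c • (x * y) := by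
  refine ext8 _ _ ?_ ?_ ?_ ?_ ?_ ?_ ?_ ?_ <;> simp <;> ring

lemma mul_smul'' (c : F) (x y : SplitOctonion F) : x * (c • y) = c • (x * y) := by
  refine ext8 _ _ ?_ ?_ ?_ ?_ ?_ ?_ ?_ ?_ <;> simp <;> ring

lemma aut_pow (g : SplitOctonion F ≃ₗ[F] SplitOctonion F) (hg : IsAlgAut g)
    (z : SplitOctonion F) : ∀ k : ℕ, g (z ^ k) = (g z) ^ k
  | 0 => by rw [pow_zero', pow_zero', hg.1]
  | (k+1) => by rw [pow_succ', hg.2, aut_pow g hg z k, pow_succ']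

lemma diag_pow (ξ₁ ξ₂ : F) : ∀ k : ℕ,
    (ξ₁ • e1 + ξ₂ • e2 : SplitOctonion F) ^ k = (ξ₁ ^ k) • e1 + (ξ₂ ^ k) • e2
  | 0 => by
    rw [pow_zero']
    refine ext8 _ _ ?_ ?_ ?_ ?_ ?_ ?_ ?_ ?_ <;> simp
  | (k+1) => by
    rw [pow_succ', diag_pow ξ₁ ξ₂ k]
    refine ext8 _ _ ?_ ?_ ?_ ?_ ?_ ?_ ?_ ?_ <;> simp [pow_succ] <;> ring

lemma exists_root_quadratic [IsAlgClosed F] (t q : F) : ∃ ξ : F, ξ * ξ = t * ξ - q := by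
  obtain ⟨z, hz⟩ := IsAlgClosed.exists_root
    (Polynomial.C 1 * Polynomial.X ^ 2 + Polynomial.C (-t) * Polynomial.X + Polynomial.C q)
    (by rw [Polynomial.degree_quadratic one_ne_zero]; norm_num)
  refine ⟨z, ?_⟩
  have := hz
  simp only [Polynomial.IsRoot, Polynomial.eval_add, Polynomial.eval_mul, Polynomial.eval_pow,
    Polynomial.eval_C, Polynomial.eval_X] at this
  linear_combination this

lemma e2_eq_one_sub : (e2 : SplitOctonion F) = 1 - e1 := by
  refine ext8 _ _ ?_ ?_ ?_ ?_ ?_ ?_ ?_ ?_ <;> simp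

end SplitOctonion


open SplitOctonion in
/-- the `n`-th roots of a scalar octonion `γ·1`. -/
theorem pow_eq_smul_one_iff {F : Type*} [Field F] [IsAlgClosed F]
    (n : ℕ) (hn : 1 < n) (γ : F) (x : SplitOctonion F) :
    x ^ n = γ • (1 : SplitOctonion F) ↔
      (∃ ξ₁ : F, ξ₁ ^ n = γ ∧ x = ξ₁ • (1 : SplitOctonion F)) ∨
      (∃ ξ₁ ξ₂ : F, ξ₁ ≠ ξ₂ ∧ ξ₁ ^ n = γ ∧ ξ₂ ^ n = γ ∧
        ∃ g : SplitOctonion F ≃ₗ[F] SplitOctonion F, IsAlgAut g ∧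
          x = g (ξ₁ • e1 + ξ₂ • e2)) ∨
      (((n : F) = 0 ∨ γ = 0) ∧ ∃ ξ₁ : F, ξ₁ ^ n = γ ∧
        ∃ g : SplitOctonion F ≃ₗ[F] SplitOctonion F, IsAlgAut g ∧
          x = g (ξ₁ • (1 : SplitOctonion F) + u1)) := by
  constructor
  · intro h
    by_cases hs : ∃ c : F, x = c • (1 : SplitOctonion F)
    · obtain ⟨c, rfl⟩ := hs
      left
      refine ⟨c, ?_, rfl⟩
      rw [smul_one_pow] at h
      have := congrArg SplitOctonion.x1 h
      simpa using this
    · have hco := pow_co x n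
      rw [h] at hco
      obtain ⟨ha, hb⟩ := coeff_eq x hs _ _ γ hco.symm
      obtain ⟨ξ, hξ⟩ := exists_root_quadratic (trO x) (normO x)
      have hξ₂ : (trO x - ξ) * (trO x - ξ) = trO x * (trO x - ξ) - normO x := by
        linear_combination hξ
      set ξ₂ := trO x - ξ with hξ₂def
      by_cases hd : ξ = ξ₂
      · -- repeated root
        have ht : trO x = 2 * ξ := by rw [hξ₂def] at hd; linear_combination -hd
        have hq : normO x = ξ * ξ := by linear_combination hξ + ξ * ht
        obtain ⟨m, rfl⟩ : ∃ m, n = m + 1 := ⟨n - 1, by omega⟩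
        have hcoef := co_repeated ξ m
        rw [← ht, ← hq] at hcoef
        have hA : ((m + 1 : ℕ) : F) * ξ ^ m = 0 := by rw [← hcoef.1]; exact ha
        have hξn : ξ ^ (m + 1) = γ := by
          have hx := xi_pow (trO x) (normO x) ξ hξ (m + 1)
          rw [ha, hb] at hx
          simpa using hx
        have hcase : ((m + 1 : ℕ) : F) = 0 ∨ γ = 0 := by
          rcases mul_eq_zero.mp hA with h' | h'
          · exact Or.inl h'
          · right
            have hm : m ≠ 0 := by omega
            have hξ0 : ξ = 0 := pow_eq_zero_iff hm |>.mp h'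
            rw [← hξn, hξ0]
            simp
        -- nilpotent part
        have htt : x.x1 + x.x2 = 2 * ξ := ht
        have hqq : x.x1 * x.x2 - (x.u 0 * x.v 0 + x.u 1 * x.v 1 + x.u 2 * x.v 2) = ξ * ξ := hq
        have hysq : (x - ξ • 1) * (x - ξ • 1) = 0 := by
          refine ext8 _ _ ?_ ?_ ?_ ?_ ?_ ?_ ?_ ?_ <;> simp
          · linear_combination x.x1 * htt - hqq
          · linear_combination x.u 0 * htt
          · linear_combination x.u 1 * htt
          · linear_combination x.u 2 * htt
          · linear_combination x.v 0 * htt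
          · linear_combination x.v 1 * htt
          · linear_combination x.v 2 * htt
          · linear_combination x.x2 * htt - hqq
        have hyne : x - ξ • 1 ≠ 0 := fun h0 => hs ⟨ξ, sub_eq_zero.mp h0⟩
        obtain ⟨g, hg, hgu⟩ := reach_nil (x - ξ • 1) hysq hyne
        refine Or.inr (Or.inr ⟨hcase, ξ, hξn, g, hg, ?_⟩)
        rw [map_add, map_smul, hg.1, hgu]
        abel
      · -- distinct roots
        have hd' : ξ - ξ₂ ≠ 0 := sub_ne_zero.mpr hd
        have hγ1 : ξ ^ n = γ := by
          have hx := xi_pow (trO x) (normO x) ξ hξ n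
          rw [ha, hb] at hx; simpa using hx
        have hγ2 : ξ₂ ^ n = γ := by
          have hx := xi_pow (trO x) (normO x) ξ₂ hξ₂ n
          rw [ha, hb] at hx; simpa using hx
        have htr0 : trO x = x.x1 + x.x2 := rfl
        have hnm0 : normO x = x.x1 * x.x2 - (x.u 0 * x.v 0 + x.u 1 * x.v 1 + x.u 2 * x.v 2) := rfl
        have htt : x.x1 + x.x2 = ξ + ξ₂ := by rw [hξ₂def]; linear_combination -htr0
        have hqq : x.x1 * x.x2 - (x.u 0 * x.v 0 + x.u 1 * x.v 1 + x.u 2 * x.v 2) = ξ * ξ₂ := by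
          rw [hξ₂def]; linear_combination hξ - hnm0
        have key : (x - ξ₂ • 1) * (x - ξ₂ • 1) = (ξ - ξ₂) • (x - ξ₂ • 1) := by
          refine ext8 _ _ ?_ ?_ ?_ ?_ ?_ ?_ ?_ ?_ <;> simp
          · linear_combination x.x1 * htt - hqq - ξ₂ * htt - (trO x - ξ) * htr0
          · linear_combination x.u 0 * htt
          · linear_combination x.u 1 * htt
          · linear_combination x.u 2 * htt
          · linear_combination x.v 0 * htt
          · linear_combination x.v 1 * htt
          · linear_combination x.v 2 * htt
          · linear_combination x.x2 * htt - hqq - ξ₂ * htt - (trO x - ξ) * htr0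
        have hee : ((ξ - ξ₂)⁻¹ • (x - ξ₂ • 1)) * ((ξ - ξ₂)⁻¹ • (x - ξ₂ • 1))
            = (ξ - ξ₂)⁻¹ • (x - ξ₂ • 1) := by
          rw [smul_mul'', mul_smul'', key, smul_smul, smul_smul]
          congr 1
          field_simp
        have htre : ((ξ - ξ₂)⁻¹ • (x - ξ₂ • 1)).x1 + ((ξ - ξ₂)⁻¹ • (x - ξ₂ • 1)).x2 = 1 := by
          simp
          field_simp
          linear_combination htt
        obtain ⟨g, hg, hge⟩ := reach_idem _ hee htre
        refine Or.inr (Or.inl ⟨ξ, ξ₂, hd, hγ1, hγ2, g, hg, ?_⟩)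
        have hge2 : g e2 = 1 - (ξ - ξ₂)⁻¹ • (x - ξ₂ • 1) := by
          rw [e2_eq_one_sub, map_sub, hg.1, hge]
        rw [map_add, map_smul, map_smul, hge, hge2]
        refine ext8 _ _ ?_ ?_ ?_ ?_ ?_ ?_ ?_ ?_ <;> simp <;> field_simp <;> ring
  · rintro (⟨ξ, hξn, rfl⟩ | ⟨ξ₁, ξ₂, hne', h1, h2, g, hg, rfl⟩ | ⟨hcase, ξ, hξn, g, hg, rfl⟩)
    · rw [smul_one_pow, hξn]
    · rw [← aut_pow g hg, diag_pow, h1, h2]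
      have : (γ • e1 + γ • e2 : SplitOctonion F) = γ • 1 := by
        refine ext8 _ _ ?_ ?_ ?_ ?_ ?_ ?_ ?_ ?_ <;> simp
      rw [this, map_smul, hg.1]
    · rw [← aut_pow g hg]
      have hz : (ξ • 1 + u1 : SplitOctonion F) ^ n = γ • 1 := by
        have htz : trO (ξ • (1:SplitOctonion F) + u1) = 2 * ξ := by simp [trO]; ring
        have hnz : normO (ξ • (1:SplitOctonion F) + u1) = ξ * ξ := by simp [normO, dot]
        have hpc := pow_co (ξ • (1:SplitOctonion F) + u1) n
        rw [htz, hnz] at hpc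
        obtain ⟨m, rfl⟩ : ∃ m, n = m + 1 := ⟨n - 1, by omega⟩
        have hcoef := co_repeated ξ m
        rcases hcase with hc | hc
        · have hm : (m : F) = -1 := by
            have h' : ((m : ℕ) : F) + 1 = 0 := by push_cast at hc ⊢; linear_combination hc
            linear_combination h'
          rw [hpc, hcoef.1, hcoef.2, hm, hc, ← hξn]
          refine ext8 _ _ ?_ ?_ ?_ ?_ ?_ ?_ ?_ ?_ <;> simp <;> ring
        · have hξ0 : ξ = 0 := by
            have := hξn; rw [hc] at this
            exact pow_eq_zero_iff (by omega : m + 1 ≠ 0) |>.mp this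
          rw [hpc, hcoef.1, hcoef.2, hξ0, hc]
          have hm : m ≠ 0 := by omega
          refine ext8 _ _ ?_ ?_ ?_ ?_ ?_ ?_ ?_ ?_ <;> simp [zero_pow hm]
      rw [hz, map_smul, hg.1]
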